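/- Let A ∈ ℝ^{n×d} have rank r and thin SVD A = UΣVᵀ, and let 1 ≤ k < d. Fix integers 1 ≤ m ≤ q ≤ r and a diagonal matrix Σ̃ = diag(d₁,…,d_q,0,…,0) ∈ ℝ^{r×r} with d₁ ≥ d₂ ≥ … ≥ d_q > 0. Let X ∈ ℝ^{d×(d−k)} satisfy XᵀX = I_{d−k}, let ε ≥ 0, and suppose the matrix W ∈ ℝ^{s×n} satisfies the four conditions: (i) ‖Σ̃Uᵀ WᵀW UΣ̃ − Σ̃²‖₂ ≤ ε; (ii) ‖Σ̃Uᵀ WᵀW A_{m,⊥} − Σ̃Uᵀ A_{m,⊥}‖_F ≤ ε‖AX‖_F; (iii) ‖A_{m,⊥}ᵀ WᵀW A_{m,⊥} − A_{m,⊥}ᵀ A_{m,⊥}‖_F ≤ (ε/√k)‖AX‖_F²; (iv) |‖W A_{m,⊥}‖_F² − ‖A_{m,⊥}‖_F²| ≤ ε‖AX‖_F². Then |‖WAX‖_F² − ‖AX‖_F²| ≤ (d_m⁻² + 2 d_m⁻¹ + 2) ε ‖AX‖_F². -/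

import Mathlib

set_option maxHeartbeats 1600000

open Matrix BigOperators

noncomputable def frobNorm {m n : Type*} [Fintype m] [Fintype n]
    (A : Matrix m n ℝ) : ℝ := Real.sqrt (∑ i, ∑ j, (A i j) ^ 2)

noncomputable def specNorm {m n : ℕ} (A : Matrix (Fin m) (Fin n) ℝ) : ℝ :=
  ‖LinearMap.toContinuousLinearMap (Matrix.toEuclideanLin A)‖

noncomputable def truncDiag {r : ℕ} (σ : Fin r → ℝ) (m : ℕ) :
    Matrix (Fin r) (Fin r) ℝ :=
  Matrix.diagonal fun i => if (i : ℕ) < m then σ i else 0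

noncomputable def samplingMatrix {n : ℕ} (p : Fin n → ℝ) (s : ℕ) (ω : Fin s → Fin n) :
    Matrix (Fin s) (Fin n) ℝ :=
  fun i j => if j = ω i then 1 / Real.sqrt (s * p j) else 0

noncomputable def expec {n s : ℕ} (p : Fin n → ℝ) (f : (Fin s → Fin n) → ℝ) : ℝ :=
  ∑ ω : Fin s → Fin n, (∏ i, p (ω i)) * f ω

open Classical in
noncomputable def probOf {n s : ℕ} (p : Fin n → ℝ) (E : (Fin s → Fin n) → Prop) : ℝ :=
  ∑ ω : Fin s → Fin n, if E ω then (∏ i, p (ω i)) else 0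

def firstCols {n r : ℕ} (U : Matrix (Fin n) (Fin r) ℝ) (k : ℕ) (h : k ≤ r) :
    Matrix (Fin n) (Fin k) ℝ :=
  fun i j => U i (Fin.castLE h j)

noncomputable def ridgeDiag {r : ℕ} (σ : Fin r → ℝ) (lam : ℝ) :
    Matrix (Fin r) (Fin r) ℝ :=
  Matrix.diagonal fun i => σ i / Real.sqrt (σ i ^ 2 + lam)

/- ### Auxiliary lemmas -/

section helpers
variable {α β γ : Type*} [Fintype α] [Fintype β] [Fintype γ]

noncomputable def fdot (A B : Matrix α β ℝ) : ℝ := ∑ i, ∑ j, A i j * B i j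

lemma fdot_self_nonneg (A : Matrix α β ℝ) : 0 ≤ fdot A A := by
  apply Finset.sum_nonneg; intro i _; apply Finset.sum_nonneg; intro j _
  exact mul_self_nonneg _

lemma frobNorm_eq (A : Matrix α β ℝ) : frobNorm A = Real.sqrt (fdot A A) := by
  simp [frobNorm, fdot, sq]

lemma frobNorm_nonneg (A : Matrix α β ℝ) : 0 ≤ frobNorm A := Real.sqrt_nonneg _

lemma frobNorm_sq (A : Matrix α β ℝ) : frobNorm A ^ 2 = fdot A A := by
  rw [frobNorm_eq, Real.sq_sqrt (fdot_self_nonneg A)]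

lemma fdot_eq_trace (A B : Matrix α β ℝ) : fdot A B = Matrix.trace (Aᵀ * B) := by
  simp only [fdot, Matrix.trace, Matrix.diag, Matrix.mul_apply, Matrix.transpose_apply]
  exact Finset.sum_comm

lemma abs_fdot_le (A B : Matrix α β ℝ) : |fdot A B| ≤ frobNorm A * frobNorm B := by
  have h : (fdot A B) ^ 2 ≤ (fdot A A) * (fdot B B) := by
    have h2 := Finset.sum_mul_sq_le_sq_mul_sq Finset.univ
      (fun p : α × β => A p.1 p.2) (fun p : α × β => B p.1 p.2)
    simpa [fdot, Fintype.sum_prod_type, sq] using h2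
  calc |fdot A B| = Real.sqrt ((fdot A B) ^ 2) := (Real.sqrt_sq_eq_abs _).symm
    _ ≤ Real.sqrt (fdot A A * fdot B B) := Real.sqrt_le_sqrt h
    _ = frobNorm A * frobNorm B := by
        rw [Real.sqrt_mul (fdot_self_nonneg A), ← frobNorm_eq, ← frobNorm_eq]

lemma frobNorm_transpose (A : Matrix α β ℝ) : frobNorm Aᵀ = frobNorm A := by
  rw [frobNorm_eq, frobNorm_eq]
  congr 1
  simp only [fdot, Matrix.transpose_apply]
  exact Finset.sum_comm

lemma frob_sq_add (P Q : Matrix α β ℝ) :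
    frobNorm (P + Q) ^ 2 = frobNorm P ^ 2 + 2 * fdot P Q + frobNorm Q ^ 2 := by
  simp only [frobNorm_sq, fdot, Matrix.add_apply, Finset.mul_sum]
  rw [← Finset.sum_add_distrib]
  rw [← Finset.sum_add_distrib]
  apply Finset.sum_congr rfl; intro i _
  rw [← Finset.sum_add_distrib, ← Finset.sum_add_distrib]
  apply Finset.sum_congr rfl; intro j _
  ring

lemma frob_mul_orthL [DecidableEq β] (U : Matrix α β ℝ) (Z : Matrix β γ ℝ)
    (hU : Uᵀ * U = 1) : frobNorm (U * Z) = frobNorm Z := by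
  rw [frobNorm_eq, frobNorm_eq Z]
  congr 1
  rw [fdot_eq_trace, fdot_eq_trace, Matrix.transpose_mul, Matrix.mul_assoc,
    ← Matrix.mul_assoc Uᵀ, hU, Matrix.one_mul]

lemma frob_mul_orthR [DecidableEq β] [DecidableEq γ] (M : Matrix α β ℝ) (X : Matrix β γ ℝ)
    (hX : Xᵀ * X = 1) : frobNorm (M * X) ≤ frobNorm M := by
  have hP : (X * Xᵀ) * (X * Xᵀ) = X * Xᵀ := by
    rw [Matrix.mul_assoc, ← Matrix.mul_assoc Xᵀ, hX, Matrix.one_mul]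
  have hPt : (X * Xᵀ)ᵀ = X * Xᵀ := by
    rw [Matrix.transpose_mul, Matrix.transpose_transpose]
  have e1 : fdot (M * X) (M * X) = Matrix.trace (Mᵀ * (M * (X * Xᵀ))) := by
    rw [fdot_eq_trace]
    have h' : (M * X)ᵀ * (M * X) = Xᵀ * (Mᵀ * (M * X)) := by
      simp only [Matrix.transpose_mul, Matrix.mul_assoc]
    rw [h', Matrix.trace_mul_comm]
    simp only [Matrix.mul_assoc]
  have e2 : fdot (M - M * (X * Xᵀ)) (M - M * (X * Xᵀ))
      = Matrix.trace (Mᵀ * M) - Matrix.trace (Mᵀ * (M * (X * Xᵀ))) := by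
    rw [fdot_eq_trace]
    have expand : (M - M * (X * Xᵀ))ᵀ * (M - M * (X * Xᵀ))
        = Mᵀ * M - Mᵀ * (M * (X * Xᵀ))
          - ((X * Xᵀ) * (Mᵀ * M) - (X * Xᵀ) * (Mᵀ * (M * (X * Xᵀ)))) := by
      simp only [Matrix.transpose_sub, Matrix.transpose_mul, Matrix.transpose_transpose,
        Matrix.sub_mul, Matrix.mul_sub, Matrix.mul_assoc]
      abel
    rw [expand, Matrix.trace_sub, Matrix.trace_sub, Matrix.trace_sub]
    have c1 : Matrix.trace ((X * Xᵀ) * (Mᵀ * M)) = Matrix.trace (Mᵀ * (M * (X * Xᵀ))) := by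
      rw [Matrix.trace_mul_comm]; simp only [Matrix.mul_assoc]
    have c2 : Matrix.trace ((X * Xᵀ) * (Mᵀ * (M * (X * Xᵀ))))
        = Matrix.trace (Mᵀ * (M * (X * Xᵀ))) := by
      rw [Matrix.trace_mul_comm]
      have h'' : Mᵀ * (M * (X * Xᵀ)) * (X * Xᵀ) = Mᵀ * (M * ((X * Xᵀ) * (X * Xᵀ))) := by
        simp only [Matrix.mul_assoc]
      rw [h'', hP]
    rw [c1, c2]; ring
  have e3 : fdot (M * X) (M * X) ≤ fdot M M := by
    have h0 := fdot_self_nonneg (M - M * (X * Xᵀ))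
    rw [e2] at h0
    rw [e1, fdot_eq_trace]
    linarith
  rw [frobNorm_eq, frobNorm_eq M]
  exact Real.sqrt_le_sqrt e3

lemma frob_one_sub_proj [DecidableEq α] [DecidableEq γ] (X : Matrix α γ ℝ)
    (hX : Xᵀ * X = 1) :
    frobNorm ((1 : Matrix α α ℝ) - X * Xᵀ) ^ 2
      = (Fintype.card α : ℝ) - (Fintype.card γ : ℝ) := by
  rw [frobNorm_sq, fdot_eq_trace]
  have hPP : X * Xᵀ * (X * Xᵀ) = X * Xᵀ := by
    rw [Matrix.mul_assoc, ← Matrix.mul_assoc Xᵀ, hX, Matrix.one_mul]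
  have hQ : ((1 : Matrix α α ℝ) - X * Xᵀ)ᵀ * (1 - X * Xᵀ) = 1 - X * Xᵀ := by
    rw [Matrix.transpose_sub, Matrix.transpose_one, Matrix.transpose_mul,
      Matrix.transpose_transpose, Matrix.sub_mul, Matrix.one_mul, Matrix.mul_sub,
      Matrix.mul_one, hPP]
    abel
  rw [hQ, Matrix.trace_sub, Matrix.trace_one, Matrix.trace_mul_comm, hX, Matrix.trace_one]

lemma sqrt_ineq_aux (a b : ℝ) (ha : 0 ≤ a) (hb : 0 ≤ b) (h : a ^ 2 ≤ b ^ 2) : a ≤ b := by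
  nlinarith

end helpers

lemma dot_mulVec_le {r : ℕ} (M : Matrix (Fin r) (Fin r) ℝ) (y : Fin r → ℝ) :
    |y ⬝ᵥ (M *ᵥ y)| ≤ specNorm M * (∑ i, (y i) ^ 2) := by
  set v : EuclideanSpace ℝ (Fin r) := (WithLp.equiv 2 _).symm y with hv
  have hMv : Matrix.toEuclideanLin M v = (WithLp.equiv 2 _).symm (M *ᵥ y) := by
    rw [hv]; exact Matrix.toEuclideanLin_apply_piLp_toLp M y
  have hinner : (inner ℝ v (Matrix.toEuclideanLin M v) : ℝ) = y ⬝ᵥ (M *ᵥ y) := by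
    rw [hMv]
    simp [PiLp.inner_apply, dotProduct, RCLike.inner_apply, hv, mul_comm]
  have hnv : ‖v‖ ^ 2 = ∑ i, (y i) ^ 2 := by
    rw [EuclideanSpace.norm_eq]
    rw [Real.sq_sqrt (by positivity)]
    simp [hv, sq_abs]
  have h1 : |(inner ℝ v (Matrix.toEuclideanLin M v) : ℝ)| ≤ ‖v‖ * ‖Matrix.toEuclideanLin M v‖ :=
    abs_real_inner_le_norm _ _
  have h2 : ‖Matrix.toEuclideanLin M v‖ ≤ specNorm M * ‖v‖ := by
    have h := (LinearMap.toContinuousLinearMap (Matrix.toEuclideanLin M)).le_opNorm v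
    rw [specNorm]
    simpa only [LinearMap.coe_toContinuousLinearMap'] using h
  calc |y ⬝ᵥ (M *ᵥ y)| = |(inner ℝ v (Matrix.toEuclideanLin M v) : ℝ)| := by rw [hinner]
    _ ≤ ‖v‖ * (specNorm M * ‖v‖) := le_trans h1 (by
        apply mul_le_mul_of_nonneg_left h2 (norm_nonneg _))
    _ = specNorm M * ‖v‖ ^ 2 := by ring
    _ = specNorm M * (∑ i, (y i) ^ 2) := by rw [hnv]

lemma abs_trace_conj_le {r t : ℕ} (M : Matrix (Fin r) (Fin r) ℝ)
    (Y : Matrix (Fin r) (Fin t) ℝ) :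
    |Matrix.trace (Yᵀ * M * Y)| ≤ specNorm M * frobNorm Y ^ 2 := by
  have hcol : Matrix.trace (Yᵀ * M * Y)
      = ∑ j, (fun i => Y i j) ⬝ᵥ (M *ᵥ (fun i => Y i j)) := by
    simp only [Matrix.trace, Matrix.diag, Matrix.mul_apply, Matrix.transpose_apply,
      dotProduct, Matrix.mulVec, Finset.sum_mul, Finset.mul_sum]
    apply Finset.sum_congr rfl; intro j _
    rw [Finset.sum_comm]
    apply Finset.sum_congr rfl; intro i _
    apply Finset.sum_congr rfl; intro l _
    ring
  rw [hcol]
  have hfs : frobNorm Y ^ 2 = ∑ j, ∑ i, (Y i j) ^ 2 := by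
    rw [show frobNorm Y ^ 2 = Real.sqrt (∑ i, ∑ j, (Y i j)^2) ^ 2 from rfl,
      Real.sq_sqrt (by positivity)]
    exact Finset.sum_comm
  rw [hfs, Finset.mul_sum]
  refine le_trans (Finset.abs_sum_le_sum_abs _ _) (Finset.sum_le_sum ?_)
  intro j _
  exact dot_mulVec_le M _

/-- structural theorem for projection-cost preservation. -/
theorem stmt_0 {n d s r : ℕ} {k m q : ℕ}
    (A : Matrix (Fin n) (Fin d) ℝ)
    (U : Matrix (Fin n) (Fin r) ℝ) (V : Matrix (Fin d) (Fin r) ℝ) (σ : Fin r → ℝ)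
    (hU : Uᵀ * U = 1) (hV : Vᵀ * V = 1)
    (hσdec : ∀ i j : Fin r, i ≤ j → σ j ≤ σ i) (hσpos : ∀ i, 0 < σ i)
    (hA : A = U * Matrix.diagonal σ * Vᵀ) (hr : A.rank = r)
    (hk1 : 1 ≤ k) (hkd : k < d)
    (hm1 : 1 ≤ m) (hmq : m ≤ q) (hqr : q ≤ r)
    (dd : Fin r → ℝ)
    (hdd_dec : ∀ i j : Fin r, i ≤ j → dd j ≤ dd i)
    (hdd_pos : ∀ i : Fin r, (i : ℕ) < q → 0 < dd i)
    (hdd_zero : ∀ i : Fin r, q ≤ (i : ℕ) → dd i = 0)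
    (X : Matrix (Fin d) (Fin (d - k)) ℝ) (hX : Xᵀ * X = 1)
    (ε : ℝ) (hε : 0 ≤ ε)
    (W : Matrix (Fin s) (Fin n) ℝ)
    (h1 : specNorm (Matrix.diagonal dd * Uᵀ * Wᵀ * W * U * Matrix.diagonal dd
        - Matrix.diagonal dd * Matrix.diagonal dd) ≤ ε)
    (h2 : frobNorm (Matrix.diagonal dd * Uᵀ * Wᵀ * W * (A - U * truncDiag σ m * Vᵀ)
        - Matrix.diagonal dd * Uᵀ * (A - U * truncDiag σ m * Vᵀ)) ≤ ε * frobNorm (A * X))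
    (h3 : frobNorm ((A - U * truncDiag σ m * Vᵀ)ᵀ * Wᵀ * W * (A - U * truncDiag σ m * Vᵀ)
        - (A - U * truncDiag σ m * Vᵀ)ᵀ * (A - U * truncDiag σ m * Vᵀ))
        ≤ (ε / Real.sqrt k) * frobNorm (A * X) ^ 2)
    (h4 : |frobNorm (W * (A - U * truncDiag σ m * Vᵀ)) ^ 2
        - frobNorm (A - U * truncDiag σ m * Vᵀ) ^ 2| ≤ ε * frobNorm (A * X) ^ 2) :
    |frobNorm (W * A * X) ^ 2 - frobNorm (A * X) ^ 2|
      ≤ ((dd ⟨m - 1, by omega⟩)⁻¹ ^ 2 + 2 * (dd ⟨m - 1, by omega⟩)⁻¹ + 2)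
        * ε * frobNorm (A * X) ^ 2 := by
  have hmr : m - 1 < r := by omega
  set dm : ℝ := dd ⟨m - 1, by omega⟩ with hdm_def
  -- basic scalar facts
  have hdm_pos : 0 < dm := hdd_pos ⟨m - 1, hmr⟩ (show m - 1 < q by omega)
  have hdd_i : ∀ i : Fin r, (i : ℕ) < m → 0 < dd i :=
    fun i hi => hdd_pos i (lt_of_lt_of_le hi hmq)
  have hdm_le : ∀ i : Fin r, (i : ℕ) < m → dm ≤ dd i := by
    intro i hi
    exact hdd_dec i ⟨m - 1, hmr⟩ (show (i : ℕ) ≤ m - 1 by omega)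
  -- diagonal pieces
  set σm : Fin r → ℝ := fun i => if (i : ℕ) < m then σ i else 0 with hσm_def
  set σp : Fin r → ℝ := fun i => if (i : ℕ) < m then 0 else σ i with hσp_def
  set bb : Fin r → ℝ := fun i => if (i : ℕ) < m then σ i * (dd i)⁻¹ else 0 with hbb_def
  have hDm : truncDiag σ m = Matrix.diagonal σm := rfl
  set Dm : Matrix (Fin r) (Fin r) ℝ := Matrix.diagonal σm with hDm_def
  rw [show truncDiag σ m = Dm from rfl] at h2 h3 h4
  set Dp : Matrix (Fin r) (Fin r) ℝ := Matrix.diagonal σp with hDp_def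
  set D : Matrix (Fin r) (Fin r) ℝ := Matrix.diagonal dd with hD_def
  set B : Matrix (Fin r) (Fin r) ℝ := Matrix.diagonal bb with hB_def
  -- key diagonal identities
  have hBD : B * D = Dm := by
    ext i j
    simp only [hB_def, hD_def, hDm_def, Matrix.diagonal_mul_diagonal,
      Matrix.diagonal_apply, Pi.mul_apply, hbb_def, hσm_def]
    by_cases h : i = j
    · simp only [if_pos h]
      by_cases hi : (i : ℕ) < m
      · simp only [if_pos hi]
        rw [mul_assoc, inv_mul_cancel₀ (ne_of_gt (hdd_i i hi)), mul_one]
      · simp [hi]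
    · simp [h]
  have hDB : D * B = Dm := by
    ext i j
    simp only [hB_def, hD_def, hDm_def, Matrix.diagonal_mul_diagonal,
      Matrix.diagonal_apply, Pi.mul_apply, hbb_def, hσm_def]
    by_cases h : i = j
    · simp only [if_pos h]
      by_cases hi : (i : ℕ) < m
      · simp only [if_pos hi]
        rw [mul_comm (σ i), ← mul_assoc, mul_inv_cancel₀ (ne_of_gt (hdd_i i hi)), one_mul]
      · simp [hi]
    · simp [h]
  have hDmDp : Dm * Dp = 0 := by
    ext i j
    simp only [hDm_def, hDp_def, Matrix.diagonal_mul_diagonal,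
      Matrix.diagonal_apply, Pi.mul_apply, hσm_def, hσp_def, Matrix.zero_apply]
    by_cases h : i = j
    · simp only [if_pos h]
      by_cases hi : (i : ℕ) < m <;> simp [hi]
    · simp [h]
  -- compositional ∀-versions for simp
  have hUU' : ∀ {c : Type} (Z : Matrix (Fin r) c ℝ), Uᵀ * (U * Z) = Z := by
    intro c Z; rw [← Matrix.mul_assoc, hU, Matrix.one_mul]
  have hBD' : ∀ {c : Type} (Z : Matrix (Fin r) c ℝ), B * (D * Z) = Dm * Z := by
    intro c Z; rw [← Matrix.mul_assoc, hBD]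
  have hDB' : ∀ {c : Type} (Z : Matrix (Fin r) c ℝ), D * (B * Z) = Dm * Z := by
    intro c Z; rw [← Matrix.mul_assoc, hDB]
  have hDmDp' : ∀ {c : Type} (Z : Matrix (Fin r) c ℝ), Dm * (Dp * Z) = 0 := by
    intro c Z; rw [← Matrix.mul_assoc, hDmDp, Matrix.zero_mul]
  -- the two halves of A
  set Am : Matrix (Fin n) (Fin d) ℝ := U * Dm * Vᵀ with hAm_def
  set Ap : Matrix (Fin n) (Fin d) ℝ := A - Am with hAp_def
  have hAsum : A = Am + Ap := by rw [hAp_def]; abel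
  have hApUDV : Ap = U * Dp * Vᵀ := by
    have hσsum : Matrix.diagonal σ = Dm + Dp := by
      ext i j
      simp only [hDm_def, hDp_def, Matrix.add_apply, Matrix.diagonal_apply, hσm_def, hσp_def]
      by_cases h : i = j
      · simp only [if_pos h]
        by_cases hi : (i : ℕ) < m <;> simp [hi]
      · simp [h]
    rw [hAp_def, hAm_def, hA, hσsum, Matrix.mul_add, Matrix.add_mul]
    abel
  have hDmT : Dmᵀ = Dm := by rw [hDm_def]; exact Matrix.diagonal_transpose σm
  have hBT : Bᵀ = B := by rw [hB_def]; exact Matrix.diagonal_transpose bb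
  -- abbreviations for the perturbation matrices
  set G : Matrix (Fin r) (Fin r) ℝ := D * Uᵀ * Wᵀ * W * U * D - D * D with hG_def
  set H : Matrix (Fin r) (Fin d) ℝ := D * Uᵀ * Wᵀ * W * Ap - D * Uᵀ * Ap with hH_def
  set E : Matrix (Fin d) (Fin d) ℝ := Apᵀ * Wᵀ * W * Ap - Apᵀ * Ap with hE_def
  set Y : Matrix (Fin r) (Fin (d - k)) ℝ := B * (Vᵀ * X) with hY_def
  clear_value dm σm σp bb Dm Dp D B Am Ap G H E Y
  -- I3 : heads and tails are orthogonal
  have hAmTAp : Amᵀ * Ap = 0 := by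
    have e : Amᵀ * Ap = V * (Dm * (Dp * Vᵀ)) := by
      rw [hAm_def, hApUDV]
      have e2 : (U * Dm * Vᵀ)ᵀ * (U * Dp * Vᵀ) = V * (Dm * (Uᵀ * (U * (Dp * Vᵀ)))) := by
        simp only [Matrix.transpose_mul, Matrix.transpose_transpose, hDmT, Matrix.mul_assoc]
      rw [e2, hUU']
    rw [e, hDmDp', Matrix.mul_zero]
  -- main splitting
  have hWAX : W * A * X = W * Am * X + W * Ap * X := by
    calc W * A * X = W * (Am + Ap) * X := by rw [← hAsum]
      _ = W * Am * X + W * Ap * X := by rw [Matrix.mul_add, Matrix.add_mul]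
  have hAX : A * X = Am * X + Ap * X := by
    calc A * X = (Am + Ap) * X := by rw [← hAsum]
      _ = Am * X + Ap * X := by rw [Matrix.add_mul]
  have hcross : fdot (Am * X) (Ap * X) = 0 := by
    rw [fdot_eq_trace]
    have e : (Am * X)ᵀ * (Ap * X) = Xᵀ * ((Amᵀ * Ap) * X) := by
      simp only [Matrix.transpose_mul, Matrix.mul_assoc]
    rw [e, hAmTAp, Matrix.zero_mul, Matrix.mul_zero, Matrix.trace_zero]
  have hsplit : frobNorm (W * A * X) ^ 2 - frobNorm (A * X) ^ 2
      = (frobNorm (W * Am * X) ^ 2 - frobNorm (Am * X) ^ 2)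
        + 2 * fdot (W * Am * X) (W * Ap * X)
        + (frobNorm (W * Ap * X) ^ 2 - frobNorm (Ap * X) ^ 2) := by
    rw [hWAX, hAX, frob_sq_add, frob_sq_add, hcross]
    ring
  -- ###### Term 1 ######
  have hI1 : (W * Am * X)ᵀ * (W * Am * X) - (Am * X)ᵀ * (Am * X) = Yᵀ * G * Y := by
    simp only [hY_def, hG_def, hAm_def, Matrix.transpose_mul, Matrix.transpose_transpose,
      hDmT, hBT, Matrix.sub_mul, Matrix.mul_sub, Matrix.mul_assoc, hUU', hBD', hDB']
  have hT1eq : frobNorm (W * Am * X) ^ 2 - frobNorm (Am * X) ^ 2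
      = Matrix.trace (Yᵀ * G * Y) := by
    rw [frobNorm_sq, frobNorm_sq, fdot_eq_trace, fdot_eq_trace, ← Matrix.trace_sub, hI1]
  have hbb_sq : ∀ i : Fin r, (bb i) ^ 2 ≤ dm⁻¹ ^ 2 * (σm i) ^ 2 := by
    intro i
    by_cases hi : (i : ℕ) < m
    · simp only [hbb_def, hσm_def, if_pos hi]
      have h1' := hdm_le i hi
      have h2' := hdd_i i hi
      have h3' := (hσpos i).le
      have hinv : (dd i)⁻¹ ≤ dm⁻¹ := by
        apply inv_anti₀ hdm_pos h1'
      have hinv0 : (0:ℝ) ≤ (dd i)⁻¹ := inv_nonneg.mpr h2'.le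
      calc (σ i * (dd i)⁻¹) ^ 2 = ((dd i)⁻¹) ^ 2 * (σ i) ^ 2 := by ring
        _ ≤ dm⁻¹ ^ 2 * (σ i) ^ 2 := by
            apply mul_le_mul_of_nonneg_right _ (sq_nonneg _)
            exact pow_le_pow_left₀ hinv0 hinv 2
    · simp [hbb_def, hσm_def, hi]
  have hYDm : frobNorm Y ^ 2 ≤ dm⁻¹ ^ 2 * frobNorm (Dm * (Vᵀ * X)) ^ 2 := by
    rw [frobNorm_sq, frobNorm_sq, hY_def, hDm_def]
    simp only [fdot, hB_def, Matrix.diagonal_mul, Finset.mul_sum]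
    apply Finset.sum_le_sum; intro i _
    apply Finset.sum_le_sum; intro j _
    calc bb i * (Vᵀ * X) i j * (bb i * (Vᵀ * X) i j)
        = (bb i) ^ 2 * ((Vᵀ * X) i j) ^ 2 := by ring
      _ ≤ (dm⁻¹ ^ 2 * (σm i) ^ 2) * ((Vᵀ * X) i j) ^ 2 := by
          apply mul_le_mul_of_nonneg_right (hbb_sq i) (sq_nonneg _)
      _ = dm⁻¹ ^ 2 * (σm i * (Vᵀ * X) i j * (σm i * (Vᵀ * X) i j)) := by ring
  have hAmX : frobNorm (Dm * (Vᵀ * X)) = frobNorm (Am * X) := by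
    have e : Am * X = U * (Dm * (Vᵀ * X)) := by
      rw [hAm_def]; simp only [Matrix.mul_assoc]
    rw [e, frob_mul_orthL U _ hU]
  have hAmle : frobNorm (Am * X) ^ 2 ≤ frobNorm (A * X) ^ 2 := by
    rw [hAX, frob_sq_add, hcross]
    nlinarith [sq_nonneg (frobNorm (Ap * X))]
  have hYsq : frobNorm Y ^ 2 ≤ dm⁻¹ ^ 2 * frobNorm (A * X) ^ 2 := by
    calc frobNorm Y ^ 2 ≤ dm⁻¹ ^ 2 * frobNorm (Dm * (Vᵀ * X)) ^ 2 := hYDm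
      _ = dm⁻¹ ^ 2 * frobNorm (Am * X) ^ 2 := by rw [hAmX]
      _ ≤ dm⁻¹ ^ 2 * frobNorm (A * X) ^ 2 := by
          apply mul_le_mul_of_nonneg_left hAmle (by positivity)
  have hT1 : |frobNorm (W * Am * X) ^ 2 - frobNorm (Am * X) ^ 2|
      ≤ ε * (dm⁻¹ ^ 2 * frobNorm (A * X) ^ 2) := by
    rw [hT1eq]
    refine le_trans (abs_trace_conj_le G Y) ?_
    apply mul_le_mul h1 hYsq (by positivity) hε
  -- ###### Term 2 ######
  have hI2 : (W * Am * X)ᵀ * (W * Ap * X) = Yᵀ * (H * X) := by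
    simp only [hY_def, hH_def, hAm_def, hApUDV, Matrix.transpose_mul,
      Matrix.transpose_transpose, hDmT, hBT, Matrix.sub_mul, Matrix.mul_sub,
      Matrix.mul_assoc, hUU', hBD', hDB', hDmDp', Matrix.mul_zero, sub_zero]
  have hT2eq : fdot (W * Am * X) (W * Ap * X) = fdot Y (H * X) := by
    rw [fdot_eq_trace, fdot_eq_trace, hI2]
  have hYle : frobNorm Y ≤ dm⁻¹ * frobNorm (A * X) := by
    apply sqrt_ineq_aux _ _ (frobNorm_nonneg Y)
      (mul_nonneg (inv_nonneg.mpr hdm_pos.le) (frobNorm_nonneg _))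
    calc frobNorm Y ^ 2 ≤ dm⁻¹ ^ 2 * frobNorm (A * X) ^ 2 := hYsq
      _ = (dm⁻¹ * frobNorm (A * X)) ^ 2 := by ring
  have hT2 : |fdot (W * Am * X) (W * Ap * X)|
      ≤ (dm⁻¹ * frobNorm (A * X)) * (ε * frobNorm (A * X)) := by
    rw [hT2eq]
    refine le_trans (abs_fdot_le Y (H * X)) ?_
    apply mul_le_mul hYle (le_trans (frob_mul_orthR H X hX) h2) (frobNorm_nonneg _)
      (mul_nonneg (inv_nonneg.mpr hdm_pos.le) (frobNorm_nonneg _))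
  -- ###### Term 3 ######
  have hT3eq : frobNorm (W * Ap * X) ^ 2 - frobNorm (Ap * X) ^ 2
      = Matrix.trace E - Matrix.trace (E * (1 - X * Xᵀ)) := by
    have step1 : frobNorm (W * Ap * X) ^ 2 - frobNorm (Ap * X) ^ 2
        = Matrix.trace (Xᵀ * (E * X)) := by
      rw [frobNorm_sq, frobNorm_sq, fdot_eq_trace, fdot_eq_trace, ← Matrix.trace_sub]
      congr 1
      simp only [hE_def, Matrix.transpose_mul, Matrix.transpose_transpose,
        Matrix.sub_mul, Matrix.mul_sub, Matrix.mul_assoc]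
    rw [step1, Matrix.trace_mul_comm, Matrix.mul_assoc, Matrix.mul_sub, Matrix.mul_one,
      Matrix.trace_sub]
    ring
  have htrE : Matrix.trace E = frobNorm (W * Ap) ^ 2 - frobNorm Ap ^ 2 := by
    rw [frobNorm_sq, frobNorm_sq, fdot_eq_trace, fdot_eq_trace, ← Matrix.trace_sub]
    congr 1
    simp only [hE_def, Matrix.transpose_mul, Matrix.mul_assoc]
  have habsE : |Matrix.trace E| ≤ ε * frobNorm (A * X) ^ 2 := by rw [htrE]; exact h4
  have hk0 : (0:ℝ) < Real.sqrt k := Real.sqrt_pos.mpr (by exact_mod_cast hk1)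
  have hQ : frobNorm ((1 : Matrix (Fin d) (Fin d) ℝ) - X * Xᵀ) = Real.sqrt k := by
    have h := frob_one_sub_proj X hX
    have hcard : (Fintype.card (Fin d) : ℝ) - (Fintype.card (Fin (d - k)) : ℝ) = (k:ℝ) := by
      simp only [Fintype.card_fin]
      rw [Nat.cast_sub (le_of_lt hkd)]
      ring
    rw [hcard] at h
    rw [← Real.sqrt_sq (frobNorm_nonneg _), h]
  have hEQ : |Matrix.trace (E * (1 - X * Xᵀ))| ≤ ε * frobNorm (A * X) ^ 2 := by
    have e : Matrix.trace (E * (1 - X * Xᵀ)) = fdot Eᵀ (1 - X * Xᵀ) := by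
      rw [fdot_eq_trace, Matrix.transpose_transpose]
    rw [e]
    refine le_trans (abs_fdot_le _ _) ?_
    rw [frobNorm_transpose, hQ]
    calc frobNorm E * Real.sqrt k
        ≤ (ε / Real.sqrt k * frobNorm (A * X) ^ 2) * Real.sqrt k := by
          apply mul_le_mul_of_nonneg_right h3 hk0.le
      _ = ε * frobNorm (A * X) ^ 2 := by field_simp
  have hT3 : |frobNorm (W * Ap * X) ^ 2 - frobNorm (Ap * X) ^ 2|
      ≤ 2 * (ε * frobNorm (A * X) ^ 2) := by
    rw [hT3eq]
    have habs : |Matrix.trace E - Matrix.trace (E * (1 - X * Xᵀ))|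
        ≤ |Matrix.trace E| + |Matrix.trace (E * (1 - X * Xᵀ))| := abs_sub _ _
    linarith
  -- ###### combine ######
  rw [hsplit]
  have habs2 : |(frobNorm (W * Am * X) ^ 2 - frobNorm (Am * X) ^ 2)
      + 2 * fdot (W * Am * X) (W * Ap * X)
      + (frobNorm (W * Ap * X) ^ 2 - frobNorm (Ap * X) ^ 2)|
      ≤ |frobNorm (W * Am * X) ^ 2 - frobNorm (Am * X) ^ 2|
        + 2 * |fdot (W * Am * X) (W * Ap * X)|
        + |frobNorm (W * Ap * X) ^ 2 - frobNorm (Ap * X) ^ 2| := by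
    refine le_trans (abs_add_le _ _) ?_
    have h' := abs_add_le (frobNorm (W * Am * X) ^ 2 - frobNorm (Am * X) ^ 2)
      (2 * fdot (W * Am * X) (W * Ap * X))
    rw [abs_mul] at h'
    simp only [abs_two] at h'
    linarith
  refine le_trans habs2 ?_
  have final : ε * (dm⁻¹ ^ 2 * frobNorm (A * X) ^ 2)
      + 2 * ((dm⁻¹ * frobNorm (A * X)) * (ε * frobNorm (A * X)))
      + 2 * (ε * frobNorm (A * X) ^ 2)
      = (dm⁻¹ ^ 2 + 2 * dm⁻¹ + 2) * ε * frobNorm (A * X) ^ 2 := by ring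
  linarith [hT1, hT2, hT3]
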